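/- The function E(s) = (1 - r'(s)^2) · cosh^2(r(s)) · sinh^{2n}(r(s)) is constant along any solution r of the ODE r'' sinh r cosh r = (1 - (r')^2)(sinh^2 r + n cosh^2 r). -/

import Mathlib

theorem stmt0 (n : ℕ) (hn : 1 ≤ n) (r : ℝ → ℝ)
    (hr : Differentiable ℝ r) (hr' : Differentiable ℝ (deriv r))
    (hpos : ∀ s, 0 < r s)
    (hode : ∀ s, deriv (deriv r) s * Real.sinh (r s) * Real.cosh (r s) =
      (1 - (deriv r s) ^ 2) * (Real.sinh (r s) ^ 2 + (n : ℝ) * Real.cosh (r s) ^ 2)) :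
    ∀ s t : ℝ,
      (1 - (deriv r s) ^ 2) * Real.cosh (r s) ^ 2 * Real.sinh (r s) ^ (2 * n) =
      (1 - (deriv r t) ^ 2) * Real.cosh (r t) ^ 2 * Real.sinh (r t) ^ (2 * n) := by
  have key : ∀ s, HasDerivAt
      (fun s => (1 - (deriv r s) ^ 2) * Real.cosh (r s) ^ 2 * Real.sinh (r s) ^ (2 * n)) 0 s := by
    intro s
    set p := deriv r s with hp
    set q := deriv (deriv r) s with hq
    have h1 : HasDerivAt r p s := (hr s).hasDerivAt
    have h2 : HasDerivAt (deriv r) q s := (hr' s).hasDerivAt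
    have hsinh : HasDerivAt (fun s => Real.sinh (r s)) (Real.cosh (r s) * p) s :=
      (Real.hasDerivAt_sinh (r s)).comp s h1
    have hcosh : HasDerivAt (fun s => Real.cosh (r s)) (Real.sinh (r s) * p) s :=
      (Real.hasDerivAt_cosh (r s)).comp s h1
    have hA : HasDerivAt (fun s => 1 - (deriv r s) ^ 2) (-(2 * p * q)) s := by
      have := (h2.fun_pow 2).const_sub 1
      refine this.congr_deriv ?_; push_cast; ring
    have hB : HasDerivAt (fun s => Real.cosh (r s) ^ 2)
        (2 * Real.cosh (r s) * (Real.sinh (r s) * p)) s := by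
      have := hcosh.fun_pow 2
      refine this.congr_deriv ?_; push_cast; ring
    have hC : HasDerivAt (fun s => Real.sinh (r s) ^ (2 * n))
        ((2 * n : ℝ) * Real.sinh (r s) ^ (2 * n - 1) * (Real.cosh (r s) * p)) s := by
      have := hsinh.fun_pow (2 * n)
      refine this.congr_deriv ?_; push_cast; ring
    have hmul := (hA.fun_mul hB).fun_mul hC
    refine hmul.congr_deriv ?_
    have hS : 0 < Real.sinh (r s) := Real.sinh_pos_iff.mpr (hpos s)
    have hpow : Real.sinh (r s) ^ (2 * n - 1) * Real.sinh (r s) = Real.sinh (r s) ^ (2 * n) := by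
      rw [← pow_succ]; congr 1; omega
    have hODE := hode s
    rw [← hp, ← hq] at hODE
    have hmain : ((-(2 * p * q) * Real.cosh (r s) ^ 2 +
        (1 - p ^ 2) * (2 * Real.cosh (r s) * (Real.sinh (r s) * p))) * Real.sinh (r s) ^ (2 * n) +
        (1 - p ^ 2) * Real.cosh (r s) ^ 2 *
          ((2 * n : ℝ) * Real.sinh (r s) ^ (2 * n - 1) * (Real.cosh (r s) * p)))
        * Real.sinh (r s) = 0 := by
      linear_combination (-(2 * p * Real.cosh (r s) * Real.sinh (r s) ^ (2 * n))) * hODE +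
        (2 * (n : ℝ) * (1 - p ^ 2) * Real.cosh (r s) ^ 3 * p) * hpow
    have := mul_eq_zero.mp hmain
    rcases this with h | h
    · rw [← hp]; linarith [h]
    · exact absurd h (ne_of_gt hS)
  intro s t
  exact is_const_of_deriv_eq_zero
    (fun x => ((key x).differentiableAt)) (fun x => (key x).deriv) s t
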